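/- The Hausdorff dimension of the middle-thirds Cantor set is log 2 / log 3. -/

import Mathlib

open Set MeasureTheory Filter
open scoped NNReal ENNReal

noncomputable section
namespace CDim

lemma summable_aux {u : ℕ → ℝ} {M r : ℝ} (hM : ∀ i, |u i| ≤ M)
    (h0 : 0 ≤ r) (h1 : r < 1) : Summable (fun i => u i * r ^ (i+1)) := by
  have hg : Summable (fun i : ℕ => M * r ^ (i+1)) := by
    simpa [pow_succ, mul_comm, mul_assoc, mul_left_comm] using
      (summable_geometric_of_lt_one h0 h1).mul_left (M * r)
  refine Summable.of_abs (hg.of_nonneg_of_le (fun i => abs_nonneg _) (fun i => ?_))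
  rw [abs_mul, abs_pow, abs_of_nonneg h0]
  exact mul_le_mul_of_nonneg_right (hM i) (pow_nonneg h0 _)

lemma abs_tsum_le {u : ℕ → ℝ} {M r : ℝ} (hM : ∀ i, |u i| ≤ M)
    (h0 : 0 ≤ r) (h1 : r < 1) (k : ℕ) (hk : ∀ i < k, u i = 0) :
    |∑' i, u i * r ^ (i+1)| ≤ M * r ^ (k+1) / (1 - r) := by
  have hs := summable_aux hM h0 h1
  have hshift : (∑' i, u i * r ^ (i+1)) = ∑' i, u (i+k) * r ^ (i+k+1) := by
    rw [← Summable.sum_add_tsum_nat_add k hs, Finset.sum_eq_zero, zero_add]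
    intro i hi
    rw [hk i (Finset.mem_range.mp hi), zero_mul]
  rw [hshift]
  have hgeom : Summable (fun i : ℕ => M * r ^ (i+k+1)) := by
    have := (summable_geometric_of_lt_one h0 h1).mul_left (M * r ^ (k+1))
    refine this.congr fun i => ?_
    ring
  calc |∑' i, u (i+k) * r ^ (i+k+1)| ≤ ∑' i, |u (i+k) * r ^ (i+k+1)| := by
        have hnorm := norm_tsum_le_tsum_norm (f := fun i => u (i+k) * r ^ (i+k+1))
          ((hs.comp_injective (add_left_injective k)).abs.congr (fun i => (Real.norm_eq_abs _).symm))
        simpa only [Real.norm_eq_abs] using hnorm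
    _ ≤ ∑' i : ℕ, M * r ^ (i+k+1) := by
        refine Summable.tsum_le_tsum (fun i => ?_) ((hs.comp_injective (add_left_injective k)).abs) hgeom
        rw [abs_mul, abs_pow, abs_of_nonneg h0]
        exact mul_le_mul_of_nonneg_right (hM _) (pow_nonneg h0 _)
    _ = M * r ^ (k+1) * (1-r)⁻¹ := by
        have : (fun i : ℕ => M * r ^ (i+k+1)) = fun i : ℕ => (M * r ^ (k+1)) * r ^ i := by
          funext i; ring
        rw [this, tsum_mul_left, tsum_geometric_of_lt_one h0 h1]
    _ = M * r ^ (k+1) / (1 - r) := by rw [div_eq_mul_inv]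

def dg (b : Bool) : ℝ := if b then 2 else 0
def dh (b : Bool) : ℝ := if b then 1 else 0

lemma dg_nonneg (b : Bool) : 0 ≤ dg b := by cases b <;> simp [dg]
lemma dg_le (b : Bool) : dg b ≤ 2 := by cases b <;> simp [dg]
lemma abs_dg_le (b : Bool) : |dg b| ≤ 2 := by cases b <;> simp [dg]
lemma abs_dh_le (b : Bool) : |dh b| ≤ 1 := by cases b <;> simp [dh]
lemma abs_dg_sub (a b : Bool) : |dg a - dg b| ≤ 2 := by
  cases a <;> cases b <;> simp [dg]
lemma abs_dh_sub (a b : Bool) : |dh a - dh b| ≤ 1 := by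
  cases a <;> cases b <;> simp [dh]
lemma abs_dg_sub_ne {a b : Bool} (h : a ≠ b) : |dg a - dg b| = 2 := by
  cases a <;> cases b <;> simp_all [dg] <;> norm_num

def g (b : ℕ → Bool) : ℝ := ∑' i, dg (b i) * (1/3:ℝ) ^ (i+1)
def cf (b : ℕ → Bool) : ℝ := ∑' i, dh (b i) * (1/2:ℝ) ^ (i+1)

lemma summable_g (b : ℕ → Bool) : Summable (fun i => dg (b i) * (1/3:ℝ) ^ (i+1)) :=
  summable_aux (u := fun i => dg (b i)) (M := 2)
    (fun i => abs_dg_le _) (by norm_num) (by norm_num)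

lemma summable_cf (b : ℕ → Bool) : Summable (fun i => dh (b i) * (1/2:ℝ) ^ (i+1)) :=
  summable_aux (u := fun i => dh (b i)) (M := 1)
    (fun i => abs_dh_le _) (by norm_num) (by norm_num)

/-- If `a` and `b` agree below `k`, the Cantor functions values are `2⁻ᵏ`-close. -/
lemma cf_close {a b : ℕ → Bool} (k : ℕ) (hk : ∀ i < k, a i = b i) :
    |cf a - cf b| ≤ (1/2:ℝ) ^ k := by
  have := abs_tsum_le (u := fun i => dh (a i) - dh (b i)) (M := 1) (r := 1/2)
    (fun i => abs_dh_sub _ _) (by norm_num) (by norm_num) k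
    (fun i hi => by show dh (a i) - dh (b i) = 0; rw [hk i hi, sub_self])
  rw [show (fun i => (dh (a i) - dh (b i)) * (1/2:ℝ)^(i+1)) = fun i => dh (a i) * (1/2:ℝ)^(i+1) - dh (b i) * (1/2:ℝ)^(i+1) from funext fun i => by ring,
    Summable.tsum_sub (summable_cf a) (summable_cf b)] at this
  calc |cf a - cf b| ≤ 1 * (1/2:ℝ)^(k+1) / (1 - 1/2) := by
        simpa [cf, sub_mul] using this
    _ = (1/2:ℝ) ^ k := by rw [pow_succ]; ring

/-- If `a` and `b` first differ at `k`, then `g a` and `g b` are `3⁻⁽ᵏ⁺¹⁾`-separated. -/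
lemma g_sep {a b : ℕ → Bool} (k : ℕ) (hk : ∀ i < k, a i = b i) (hne : a k ≠ b k) :
    (1/3:ℝ) ^ (k+1) ≤ |g a - g b| := by
  set u : ℕ → ℝ := fun i => dg (a i) - dg (b i) with hu
  set u' : ℕ → ℝ := fun i => if i = k then 0 else u i with hu'
  have hdiff : g a - g b = ∑' i, u i * (1/3:ℝ) ^ (i+1) := by
    rw [show (fun i => u i * (1/3:ℝ)^(i+1)) = fun i => dg (a i) * (1/3:ℝ)^(i+1) - dg (b i) * (1/3:ℝ)^(i+1) from funext fun i => by simp [hu]; ring,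
      Summable.tsum_sub (summable_g a) (summable_g b)]
    rfl
  have hsplit : ∀ i, u i * (1/3:ℝ)^(i+1) = u' i * (1/3:ℝ)^(i+1) + (if i = k then u k * (1/3:ℝ)^(k+1) else 0) := by
    intro i
    by_cases h : i = k <;> simp [hu', h]
  have hsu' : Summable (fun i => u' i * (1/3:ℝ)^(i+1)) := by
    refine summable_aux (M := 2) (fun i => ?_) (by norm_num) (by norm_num)
    by_cases h : i = k <;> simp [hu', hu, h, abs_dg_sub]
  have hsum : (∑' i, u i * (1/3:ℝ)^(i+1))
      = (∑' i, u' i * (1/3:ℝ)^(i+1)) + u k * (1/3:ℝ)^(k+1) := by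
    rw [show (fun i => u i * (1/3:ℝ)^(i+1)) = fun i => u' i * (1/3:ℝ)^(i+1) + (if i = k then u k * (1/3:ℝ)^(k+1) else 0) from funext hsplit,
      Summable.tsum_add hsu' ?_, tsum_ite_eq]
    exact summable_of_ne_finset_zero (s := {k}) (fun i hi => by
      simp at hi; simp [hi])
  have htail : |∑' i, u' i * (1/3:ℝ)^(i+1)| ≤ 2 * (1/3:ℝ)^(k+2) / (1 - 1/3) := by
    refine abs_tsum_le (M := 2) (fun i => ?_) (by norm_num) (by norm_num) (k+1) (fun i hi => ?_)
    · by_cases h : i = k <;> simp [hu', hu, h, abs_dg_sub]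
    · rcases Nat.lt_succ_iff_lt_or_eq.mp hi with h | h
      · simp [hu', hu, hk i h, Nat.ne_of_lt h]
      · simp [hu', h]
  have hmain : |u k * (1/3:ℝ)^(k+1)| = 2 * (1/3:ℝ)^(k+1) := by
    rw [abs_mul, abs_pow, abs_dg_sub_ne hne]
    norm_num
  rw [hdiff, hsum]
  have h1 : |(∑' i, u' i * (1/3:ℝ)^(i+1)) + u k * (1/3:ℝ)^(k+1)|
      ≥ |u k * (1/3:ℝ)^(k+1)| - |∑' i, u' i * (1/3:ℝ)^(i+1)| := by
    have := abs_add_le (∑' i, u' i * (1/3:ℝ)^(i+1)) (u k * (1/3:ℝ)^(k+1))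
    have h2 := abs_sub_abs_le_abs_sub (u k * (1/3:ℝ)^(k+1)) (-(∑' i, u' i * (1/3:ℝ)^(i+1)))
    simp only [sub_neg_eq_add, abs_neg] at h2
    rw [add_comm (u k * (1/3:ℝ)^(k+1))] at h2
    linarith [h2]
  calc (1/3:ℝ)^(k+1) = 2 * (1/3:ℝ)^(k+1) - 2 * (1/3:ℝ)^(k+2) / (1 - 1/3) := by
        rw [pow_succ _ (k+1)]; ring
    _ ≤ |u k * (1/3:ℝ)^(k+1)| - |∑' i, u' i * (1/3:ℝ)^(i+1)| := by
        rw [hmain]; linarith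
    _ ≤ _ := h1

lemma g_injective : Function.Injective g := by
  intro a b hab
  by_contra hne
  have hex : ∃ k, a k ≠ b k := by
    by_contra h
    push_neg at h
    exact hne (funext h)
  classical
  have hk : ∀ i < Nat.find hex, a i = b i := fun i hi => not_not.mp (Nat.find_min hex hi)
  have hsep := g_sep (Nat.find hex) hk (Nat.find_spec hex)
  rw [hab, sub_self, abs_zero] at hsep
  have : (0:ℝ) < (1/3:ℝ)^(Nat.find hex + 1) := by positivity
  exact absurd hsep this.not_ge

lemma g_nonneg (b : ℕ → Bool) : 0 ≤ g b := by
  rw [g]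
  exact tsum_nonneg fun i => mul_nonneg (dg_nonneg _) (pow_nonneg (by norm_num) _)

lemma g_le_one (b : ℕ → Bool) : g b ≤ 1 := by
  have h2 : Summable (fun i : ℕ => 2 * (1/3:ℝ) ^ (i+1)) :=
    summable_aux (u := fun _ => 2) (M := 2) (fun i => by norm_num) (by norm_num) (by norm_num)
  have hle : ∀ i : ℕ, dg (b i) * (1/3:ℝ)^(i+1) ≤ 2 * (1/3:ℝ)^(i+1) := fun i =>
    mul_le_mul_of_nonneg_right (dg_le _) (pow_nonneg (by norm_num) _)
  rw [g]
  have h3 : (∑' i : ℕ, dg (b i) * (1/3:ℝ)^(i+1)) ≤ ∑' i : ℕ, 2 * (1/3:ℝ)^(i+1) :=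
    Summable.tsum_le_tsum hle (summable_g b) h2
  refine h3.trans_eq ?_
  have : (fun i : ℕ => 2 * (1/3:ℝ) ^ (i+1)) = fun i : ℕ => (2/3 : ℝ) * (1/3)^i := by
    funext i; rw [pow_succ]; ring
  rw [this, tsum_mul_left, tsum_geometric_of_lt_one (by norm_num) (by norm_num)]
  norm_num

lemma g_succ (b : ℕ → Bool) : g b = (dg (b 0) + g (fun i => b (i+1))) / 3 := by
  rw [g, Summable.tsum_eq_zero_add (summable_g b)]
  have : (fun i : ℕ => dg (b (i+1)) * (1/3:ℝ) ^ (i+1+1)) = fun i : ℕ => (1/3 : ℝ) * (dg (b (i+1)) * (1/3)^(i+1)) := by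
    funext i; rw [pow_succ]; ring
  rw [this, tsum_mul_left]
  rw [show (∑' i, dg (b (i+1)) * (1/3:ℝ)^(i+1)) = g (fun i => b (i+1)) from rfl]
  ring

lemma g_mem_preCantorSet (n : ℕ) (b : ℕ → Bool) : g b ∈ preCantorSet n := by
  induction n generalizing b with
  | zero => exact ⟨g_nonneg b, g_le_one b⟩
  | succ n ih =>
    rw [g_succ b]
    cases hb : b 0 with
    | false =>
      exact Or.inl ⟨g (fun i => b (i+1)), ih _, by simp [dg, hb]⟩
    | true =>
      exact Or.inr ⟨g (fun i => b (i+1)), ih _, by simp [dg, hb, add_comm]⟩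

lemma range_g_subset : Set.range g ⊆ cantorSet := by
  rintro x ⟨b, rfl⟩
  exact Set.mem_iInter.mpr fun n => g_mem_preCantorSet n b

def seq (y : ℝ) : ℕ → ℝ
  | 0 => y
  | n+1 => 2 * seq y n - (if 1/2 ≤ seq y n then 1 else 0)

def bits (y : ℝ) (n : ℕ) : Bool := decide (1/2 ≤ seq y n)

lemma seq_mem (y : ℝ) (hy : y ∈ Icc (0:ℝ) 1) (n : ℕ) : seq y n ∈ Icc (0:ℝ) 1 := by
  induction n with
  | zero => exact hy
  | succ n ih =>
    obtain ⟨h0, h1⟩ := ih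
    by_cases h : 1/2 ≤ seq y n
    · simp only [seq, if_pos h]
      constructor <;> linarith
    · simp only [seq, if_neg h]
      push_neg at h
      constructor <;> linarith

lemma dh_bits (y : ℝ) (n : ℕ) : dh (bits y n) = if 1/2 ≤ seq y n then 1 else 0 := by
  by_cases h : 1/2 ≤ seq y n <;> simp [dh, bits, h]

lemma partial_sum_eq (y : ℝ) (n : ℕ) :
    (∑ i ∈ Finset.range n, dh (bits y i) * (1/2:ℝ) ^ (i+1)) = y - seq y n * (1/2:ℝ) ^ n := by
  induction n with
  | zero => simp [seq]
  | succ n ih =>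
    rw [Finset.sum_range_succ, ih, dh_bits]
    have : seq y (n+1) = 2 * seq y n - (if 1/2 ≤ seq y n then 1 else 0) := rfl
    rw [this]
    by_cases h : 1/2 ≤ seq y n <;> simp only [if_pos, if_neg, h, if_true, if_false] <;>
      · rw [pow_succ]; ring

lemma cf_bits (y : ℝ) (hy : y ∈ Icc (0:ℝ) 1) : cf (bits y) = y := by
  have hs := summable_cf (bits y)
  have htend := hs.hasSum.tendsto_sum_nat
  have htend2 : Tendsto (fun n => ∑ i ∈ Finset.range n, dh (bits y i) * (1/2:ℝ) ^ (i+1))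
      atTop (nhds y) := by
    simp only [partial_sum_eq]
    have hz : Tendsto (fun n : ℕ => seq y n * (1/2:ℝ) ^ n) atTop (nhds 0) := by
      refine squeeze_zero_norm (a := fun n : ℕ => (1/2:ℝ)^n) (fun n => ?_) ?_
      · show ‖seq y n * (1/2:ℝ)^n‖ ≤ (1/2:ℝ)^n
        rw [norm_mul, norm_pow]
        have := seq_mem y hy n
        calc ‖seq y n‖ * ‖(1/2:ℝ)‖ ^ n ≤ 1 * ‖(1/2:ℝ)‖ ^ n := by
              refine mul_le_mul_of_nonneg_right ?_ (by positivity)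
              rw [Real.norm_eq_abs, abs_le]
              exact ⟨by linarith [this.1], this.2⟩
          _ = (1/2:ℝ)^n := by rw [one_mul, Real.norm_eq_abs, abs_of_nonneg]; norm_num
      · exact tendsto_pow_atTop_nhds_zero_of_lt_one (by norm_num) (by norm_num)
    simpa using tendsto_const_nhds.sub hz
  exact tendsto_nhds_unique htend htend2

def dC : ℝ := Real.log 2 / Real.log 3

lemma dC_pos : 0 < dC :=
  div_pos (Real.log_pos (by norm_num)) (Real.log_pos (by norm_num))

lemma three_rpow : (3:ℝ) ^ dC = 2 := by
  rw [Real.rpow_def_of_pos (by norm_num : (0:ℝ) < 3), dC,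
    mul_div_cancel₀ _ (Real.log_pos (by norm_num : (1:ℝ) < 3)).ne',
    Real.exp_log (by norm_num)]

lemma third_rpow : ((1/3:ℝ)) ^ dC = 1/2 := by
  rw [one_div, Real.inv_rpow (by norm_num : (0:ℝ) ≤ 3), three_rpow, one_div]

lemma third_pow_rpow (k : ℕ) : ((1/3:ℝ) ^ k) ^ dC = (1/2:ℝ) ^ k := by
  rw [← Real.rpow_natCast (1/3:ℝ) k, ← Real.rpow_mul (by norm_num), mul_comm,
    Real.rpow_mul (by norm_num), Real.rpow_natCast, third_rpow]

def F : ℝ → ℝ := fun x => cf (Function.invFun g x)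

lemma F_g (a : ℕ → Bool) : F (g a) = cf a := by
  rw [F, Function.leftInverse_invFun g_injective a]

lemma F_holder : HolderOnWith 2 ⟨dC, dC_pos.le⟩ F (Set.range g) := by
  rintro x ⟨a, rfl⟩ y ⟨b, rfl⟩
  by_cases hab : a = b
  · subst hab; simp
  have hex : ∃ k, a k ≠ b k := by
    by_contra hcon
    push_neg at hcon
    exact hab (funext hcon)
  classical
  have hk : ∀ i < Nat.find hex, a i = b i := fun i hi => not_not.mp (Nat.find_min hex hi)
  set k := Nat.find hex with hkdef
  have hclose := cf_close k hk
  have hsep := g_sep k hk (Nat.find_spec hex)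
  have hreal : |F (g a) - F (g b)| ≤ 2 * |g a - g b| ^ dC := by
    rw [F_g, F_g]
    have h1 : ((1/3:ℝ)^(k+1)) ^ dC ≤ |g a - g b| ^ dC :=
      Real.rpow_le_rpow (by positivity) hsep dC_pos.le
    rw [third_pow_rpow] at h1
    calc |cf a - cf b| ≤ (1/2:ℝ)^k := hclose
      _ = 2 * (1/2:ℝ)^(k+1) := by rw [pow_succ]; ring
      _ ≤ 2 * |g a - g b| ^ dC := by linarith
  rw [edist_dist, edist_dist, Real.dist_eq, Real.dist_eq]
  calc ENNReal.ofReal |F (g a) - F (g b)| ≤ ENNReal.ofReal (2 * |g a - g b| ^ dC) :=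
        ENNReal.ofReal_le_ofReal hreal
    _ = ENNReal.ofReal 2 * ENNReal.ofReal (|g a - g b| ^ dC) :=
        ENNReal.ofReal_mul (by norm_num)
    _ = (2 : ℝ≥0) * ENNReal.ofReal |g a - g b| ^ (dC : ℝ) := by
        rw [← ENNReal.ofReal_rpow_of_nonneg (abs_nonneg _) dC_pos.le]
        norm_num
    _ = (2 : ℝ≥0) * ENNReal.ofReal |g a - g b| ^ (((⟨dC, dC_pos.le⟩ : ℝ≥0) : ℝ)) := rfl

lemma Icc_subset_image : Icc (0:ℝ) 1 ⊆ F '' (Set.range g) := by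
  intro y hy
  exact ⟨g (bits y), ⟨bits y, rfl⟩, by rw [F_g, cf_bits y hy]⟩

lemma lower_bound : ENNReal.ofReal dC ≤ dimH cantorSet := by
  set rc : ℝ≥0 := ⟨dC, dC_pos.le⟩ with hrc
  have himg := F_holder.dimH_image_le (by exact_mod_cast dC_pos)
  have h1 : (1 : ℝ≥0∞) = dimH (Icc (0:ℝ) 1) := by
    rw [Real.dimH_of_nonempty_interior (by rw [interior_Icc]; exact ⟨1/2, by norm_num⟩)]
    simp
  have h2 : (1 : ℝ≥0∞) ≤ dimH (Set.range g) / (rc : ℝ≥0∞) := by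
    rw [h1]
    exact (dimH_mono Icc_subset_image).trans himg
  have hrc0 : (rc : ℝ≥0∞) ≠ 0 := by
    simp only [ne_eq, ENNReal.coe_eq_zero]
    exact_mod_cast (ne_of_gt (by exact_mod_cast dC_pos))
  have h3 : (rc : ℝ≥0∞) ≤ dimH (Set.range g) := by
    have := (ENNReal.le_div_iff_mul_le (Or.inl hrc0) (Or.inl ENNReal.coe_ne_top)).mp h2
    simpa using this
  refine le_trans ?_ ((dimH_mono range_g_subset).trans' h3)
  rw [ENNReal.ofReal, Real.toNNReal_of_nonneg dC_pos.le]
  exact le_rfl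

def base (n : ℕ) (c : Fin n → Bool) : ℝ := ∑ i : Fin n, dg (c i) * (1/3:ℝ) ^ (i.val+1)
def itv (n : ℕ) (c : Fin n → Bool) : Set ℝ := Icc (base n c) (base n c + (1/3:ℝ)^n)

lemma base_cons (n : ℕ) (q : Bool) (c : Fin n → Bool) :
    base (n+1) (Fin.cons q c) = (dg q + base n c) / 3 := by
  rw [base, Fin.sum_univ_succ]
  simp only [Fin.cons_zero, Fin.cons_succ, Fin.val_zero, Fin.val_succ]
  rw [base, add_div, Finset.sum_div]
  congr 1
  · rw [pow_one]; ring
  · refine Finset.sum_congr rfl fun i _ => ?_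
    rw [pow_succ]
    ring

lemma cover (n : ℕ) : preCantorSet n ⊆ ⋃ c : Fin n → Bool, itv n c := by
  induction n with
  | zero =>
    intro x hx
    refine Set.mem_iUnion.mpr ⟨Fin.elim0, ?_⟩
    simpa [itv, base] using hx
  | succ n ih =>
    rintro x (⟨u, hu, rfl⟩ | ⟨u, hu, rfl⟩)
    · obtain ⟨c, hc⟩ := Set.mem_iUnion.mp (ih hu)
      obtain ⟨h1, h2⟩ := hc
      refine Set.mem_iUnion.mpr ⟨Fin.cons false c, ?_⟩
      rw [itv, base_cons]
      constructor
      · show (dg false + base n c) / 3 ≤ u / 3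
        rw [show dg false = 0 from by simp [dg]]
        linarith
      · show u / 3 ≤ (dg false + base n c) / 3 + (1/3:ℝ)^(n+1)
        rw [show dg false = 0 from by simp [dg]]
        rw [pow_succ]
        linarith
    · obtain ⟨c, hc⟩ := Set.mem_iUnion.mp (ih hu)
      obtain ⟨h1, h2⟩ := hc
      refine Set.mem_iUnion.mpr ⟨Fin.cons true c, ?_⟩
      rw [itv, base_cons]
      constructor
      · show (dg true + base n c) / 3 ≤ (2 + u) / 3
        rw [show dg true = 2 from by simp [dg]]
        linarith
      · show (2 + u) / 3 ≤ (dg true + base n c) / 3 + (1/3:ℝ)^(n+1)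
        rw [show dg true = 2 from by simp [dg]]
        rw [pow_succ]
        linarith

lemma ediam_itv (n : ℕ) (c : Fin n → Bool) :
    EMetric.diam (itv n c) = ENNReal.ofReal ((1/3:ℝ)^n) := by
  rw [show EMetric.diam (itv n c) = Metric.ediam (itv n c) from rfl, itv, Real.ediam_Icc, add_sub_cancel_left]

lemma sum_eq_one (n : ℕ) :
    (∑ c : Fin n → Bool, EMetric.diam (itv n c) ^ dC) = 1 := by
  have hterm : ∀ c : Fin n → Bool, EMetric.diam (itv n c) ^ dC
      = ENNReal.ofReal ((1/2:ℝ)^n) := by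
    intro c
    rw [ediam_itv, ENNReal.ofReal_rpow_of_nonneg (by positivity : (0:ℝ) ≤ (1/3:ℝ)^n) dC_pos.le, third_pow_rpow]
  rw [Finset.sum_congr rfl (fun c _ => hterm c), Finset.sum_const, Finset.card_univ,
    nsmul_eq_mul]
  have hcard : (Fintype.card (Fin n → Bool)) = 2^n := by
    simp [Fintype.card_fun]
  rw [hcard]
  push_cast
  rw [← ENNReal.ofReal_ofNat, ← ENNReal.ofReal_pow (by norm_num), ← ENNReal.ofReal_mul (by positivity)]
  rw [show (2:ℝ)^n * (1/2:ℝ)^n = 1 by rw [← mul_pow]; norm_num]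
  exact ENNReal.ofReal_one

lemma measure_le_one : μH[dC] cantorSet ≤ 1 := by
  have hmu := MeasureTheory.Measure.hausdorffMeasure_le_liminf_sum dC cantorSet
    (fun n : ℕ => ENNReal.ofReal ((1/3:ℝ)^n))
    (by
      rw [← ENNReal.ofReal_zero]
      exact ENNReal.tendsto_ofReal
        (tendsto_pow_atTop_nhds_zero_of_lt_one (by norm_num) (by norm_num)))
    itv
    (Filter.Eventually.of_forall fun n c => (ediam_itv n c).le)
    (Filter.Eventually.of_forall fun n => (Set.iInter_subset _ n).trans (cover n))
  refine hmu.trans ?_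
  have : (fun n : ℕ => ∑ c : Fin n → Bool, EMetric.diam (itv n c) ^ dC) = fun _ => (1:ℝ≥0∞) :=
    funext sum_eq_one
  rw [show (fun n : ℕ => ∑ c : Fin n → Bool, Metric.ediam (itv n c) ^ dC) = fun _ => (1:ℝ≥0∞) from this, Filter.liminf_const]

lemma upper_bound : dimH cantorSet ≤ ENNReal.ofReal dC := by
  have h := dimH_le_of_hausdorffMeasure_ne_top (d := ⟨dC, dC_pos.le⟩) (s := cantorSet)
    (by
      show μH[((⟨dC, dC_pos.le⟩ : ℝ≥0) : ℝ)] cantorSet ≠ ⊤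
      exact (measure_le_one.trans_lt ENNReal.one_lt_top).ne)
  rw [ENNReal.ofReal, Real.toNNReal_of_nonneg dC_pos.le]
  exact h

end CDim

theorem stmt_10 : dimH cantorSet = ENNReal.ofReal (Real.log 2 / Real.log 3) :=
  le_antisymm CDim.upper_bound CDim.lower_bound
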